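/- arXiv:1501.00378 — 4 statements merged into one kernel-verified Lean document; each statement's English description precedes it below -/
import Mathlib

section
/- Let f be a binary string of length n, and let r, s, t be positive integers with g = gcd(r,s), n > r + s - g and t ≤ n + g - r - s. Consider the r/g equations f_{t+(i-1)g} = f_{t+(i-1)g+s} for i = 1,...,r/g, together with the s/g equations f_{t+(j-1)g} = f_{t+(j-1)g+r} for j = 1,...,s/g. If any (r+s)/g - 1 of these (r+s)/g equations hold, then the remaining one also holds. -/
/-- `bitEq f p q` says that the `p`-th and `q`-th bits (1-based) of the binary
string `f` are equal. -/
def bitEq {n : ℕ} (f : Fin n → Bool) (p q : ℕ) : Prop :=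
  ∀ (hp : p - 1 < n) (hq : q - 1 < n), f ⟨p - 1, hp⟩ = f ⟨q - 1, hq⟩

lemma chain_lemma {N p : ℕ} (hN : 0 < N) (hcop : Nat.Coprime p N)
    (x₀ : ℕ) (hx₀ : x₀ < N) (F : ℕ → Bool)
    (he : ∀ x < N, x ≠ x₀ → F x = F ((x + p) % N)) :
    F x₀ = F ((x₀ + p) % N) := by
  have key : ∀ k, 1 ≤ k → k ≤ N → F ((x₀ + k * p) % N) = F ((x₀ + p) % N) := by
    intro k
    induction k with
    | zero => omega
    | succ k ih =>
      intro hk1 hk2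
      rcases Nat.eq_or_lt_of_le hk1 with h1 | h1
      · rw [← h1]; simp
      · have hk : 1 ≤ k := by omega
        have hkN : k < N := by omega
        have hx : (x₀ + k * p) % N ≠ x₀ := by
          intro h
          have hmod : x₀ ≡ x₀ + k * p [MOD N] := by
            show x₀ % N = (x₀ + k * p) % N
            rw [Nat.mod_eq_of_lt hx₀, h]
          have hdvd : N ∣ k * p := by
            have := (Nat.modEq_iff_dvd' (Nat.le_add_right _ _)).mp hmod
            simpa using this
          have : N ∣ k := (Nat.Coprime.dvd_of_dvd_mul_right hcop.symm) hdvd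
          have := Nat.le_of_dvd (by omega) this
          omega
        have step := he ((x₀ + k * p) % N) (Nat.mod_lt _ hN) hx
        rw [Nat.mod_add_mod] at step
        have : x₀ + k * p + p = x₀ + (k + 1) * p := by ring
        rw [this] at step
        rw [← step]
        exact ih hk (by omega)
  have := key N (by omega) le_rfl
  rwa [Nat.add_mul_mod_self_left, Nat.mod_eq_of_lt hx₀] at this

lemma bitEq_iff' {n : ℕ} (f : Fin n → Bool) (a b a' b' : ℕ) (ha : a' < n) (hb : b' < n)
    (ea : a - 1 = a') (eb : b - 1 = b') : bitEq f a b ↔ f ⟨a', ha⟩ = f ⟨b', hb⟩ := by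
  subst ea; subst eb
  constructor
  · intro h; exact h ha hb
  · intro h hp hq; exact h

/-- Lemma 2.4: if any `(r+s)/g - 1` of the `(r+s)/g` equations
`f_{t+(i-1)g} = f_{t+(i-1)g+s}` (`i = 1,…,r/g`) and
`f_{t+(j-1)g} = f_{t+(j-1)g+r}` (`j = 1,…,s/g`) hold, then the remaining one
also holds. -/
theorem stmt_2 (n r s t : ℕ) (hr : 0 < r) (hs : 0 < s) (ht : 0 < t)
    (g : ℕ) (hg : g = Nat.gcd r s)
    (hn : r + s - g < n) (htn : t ≤ n + g - r - s) (f : Fin n → Bool) :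
    (∀ i₀ ∈ Finset.Icc 1 (r / g),
      (∀ i ∈ Finset.Icc 1 (r / g), i ≠ i₀ →
        bitEq f (t + (i - 1) * g) (t + (i - 1) * g + s)) →
      (∀ j ∈ Finset.Icc 1 (s / g),
        bitEq f (t + (j - 1) * g) (t + (j - 1) * g + r)) →
      bitEq f (t + (i₀ - 1) * g) (t + (i₀ - 1) * g + s)) ∧
    (∀ j₀ ∈ Finset.Icc 1 (s / g),
      (∀ i ∈ Finset.Icc 1 (r / g),
        bitEq f (t + (i - 1) * g) (t + (i - 1) * g + s)) →
      (∀ j ∈ Finset.Icc 1 (s / g), j ≠ j₀ →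
        bitEq f (t + (j - 1) * g) (t + (j - 1) * g + r)) →
      bitEq f (t + (j₀ - 1) * g) (t + (j₀ - 1) * g + r)) := by
  have hg0 : 0 < g := by rw [hg]; exact Nat.gcd_pos_of_pos_left s hr
  obtain ⟨m, hmm⟩ : g ∣ r := hg ▸ Nat.gcd_dvd_left r s
  obtain ⟨p, hpp⟩ : g ∣ s := hg ▸ Nat.gcd_dvd_right r s
  have hm0 : 0 < m := by
    rcases Nat.eq_zero_or_pos m with h | h
    · simp [h] at hmm; omega
    · exact h
  have hp0 : 0 < p := by
    rcases Nat.eq_zero_or_pos p with h | h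
    · simp [h] at hpp; omega
    · exact h
  have hmg : m * g = r := by rw [hmm, Nat.mul_comm]
  have hpg : p * g = s := by rw [hpp, Nat.mul_comm]
  have hrg : r / g = m := by rw [hmm, Nat.mul_div_cancel_left _ hg0]
  have hsg : s / g = p := by rw [hpp, Nat.mul_div_cancel_left _ hg0]
  have hcop' : Nat.Coprime m p := by
    have h0 : 0 < Nat.gcd r s := by rw [← hg]; exact hg0
    have := Nat.coprime_div_gcd_div_gcd h0
    rwa [← hg, hrg, hsg] at this
  have hcopN : Nat.Coprime p (m + p) := by
    simp [Nat.coprime_add_self_right]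
    exact hcop'.symm
  have hN0 : 0 < m + p := by omega
  -- all positions fit inside the string
  have hb : ∀ x, x < m + p → t + x * g - 1 < n ∧ t + x * g ≤ n := by
    intro x hx
    have h1 : x * g ≤ (m + p - 1) * g := Nat.mul_le_mul_right _ (by omega)
    have h2 : (m + p - 1) * g + g = m * g + p * g := by
      have h3 : (m + p - 1) + 1 = m + p := by omega
      calc (m + p - 1) * g + g = ((m + p - 1) + 1) * g := by rw [Nat.succ_mul]
        _ = (m + p) * g := by rw [h3]
        _ = m * g + p * g := Nat.add_mul _ _ _
    rw [hmg, hpg] at h2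
    omega
  set F : ℕ → Bool := fun x => if h : t + x * g - 1 < n then f ⟨t + x * g - 1, h⟩ else false
    with hF
  have hFeq : ∀ x (h : t + x * g - 1 < n), F x = f ⟨t + x * g - 1, h⟩ := by
    intro x h
    simp only [hF]
    exact dif_pos h
  have keyA : ∀ x, x < m →
      ((F x = F ((x + p) % (m + p))) ↔ bitEq f (t + x * g) (t + x * g + s)) := by
    intro x hx
    have hx' : x + p < m + p := by omega
    have h1 := (hb x (by omega)).1
    have h2 := (hb (x + p) hx').1
    have hxs : t + (x + p) * g = t + x * g + s := by
      rw [Nat.add_mul, hpg, Nat.add_assoc]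
    rw [Nat.mod_eq_of_lt hx', hFeq x h1, hFeq (x + p) h2]
    rw [bitEq_iff' f (t + x * g) (t + x * g + s) _ _ h1 h2 rfl (by rw [← hxs])]
  have keyB : ∀ x, m ≤ x → x < m + p →
      ((F x = F ((x + p) % (m + p))) ↔
        bitEq f (t + (x - m) * g) (t + (x - m) * g + r)) := by
    intro x hxm hxN
    have hmod : (x + p) % (m + p) = x - m := by
      have h4 : x + p = (x - m) + (m + p) := by omega
      rw [h4, Nat.add_mod_right, Nat.mod_eq_of_lt (by omega)]
    have h1 := (hb x hxN).1
    have h2 := (hb (x - m) (by omega)).1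
    have hxr : t + (x - m) * g + r = t + x * g := by
      have h5 : (x - m) * g + m * g = x * g := by
        rw [← Nat.add_mul]
        congr 1
        omega
      rw [← hmg, Nat.add_assoc, h5]
    rw [hmod, hFeq x h1, hFeq (x - m) h2]
    rw [bitEq_iff' f (t + (x - m) * g) (t + (x - m) * g + r) _ _ h2 h1 rfl (by rw [hxr])]
    exact ⟨Eq.symm, Eq.symm⟩
  constructor
  · intro i₀ hi₀ hA hB
    rw [Finset.mem_Icc, hrg] at hi₀
    have hx₀ : i₀ - 1 < m + p := by omega
    have he : ∀ x < m + p, x ≠ i₀ - 1 → F x = F ((x + p) % (m + p)) := by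
      intro x hxN hxne
      by_cases hxm : x < m
      · refine (keyA x hxm).mpr ?_
        have h := hA (x + 1) (by rw [Finset.mem_Icc, hrg]; omega) (by omega)
        simpa using h
      · refine (keyB x (by omega) hxN).mpr ?_
        have h := hB (x - m + 1) (by rw [Finset.mem_Icc, hsg]; omega)
        simpa using h
    exact (keyA (i₀ - 1) (by omega)).mp (chain_lemma hN0 hcopN (i₀ - 1) hx₀ F he)
  · intro j₀ hj₀ hA hB
    rw [Finset.mem_Icc, hsg] at hj₀
    have hx₀ : j₀ - 1 + m < m + p := by omega
    have he : ∀ x < m + p, x ≠ j₀ - 1 + m → F x = F ((x + p) % (m + p)) := by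
      intro x hxN hxne
      by_cases hxm : x < m
      · refine (keyA x hxm).mpr ?_
        have h := hA (x + 1) (by rw [Finset.mem_Icc, hrg]; omega)
        simpa using h
      · refine (keyB x (by omega) hxN).mpr ?_
        have h := hB (x - m + 1) (by rw [Finset.mem_Icc, hsg]; omega) (by omega)
        simpa using h
    have h := (keyB (j₀ - 1 + m) (by omega) hx₀).mp (chain_lemma hN0 hcopN (j₀ - 1 + m) hx₀ F he)
    simpa using h
end

section
/- Let f be a nonempty binary string and d ≥ 1. If Q_d(f) is not an isometric subgraph of Q_d, then there exist p-critical words for Q_d(f) for some p ≥ 2; that is, there exist vertices α, β of Q_d(f) with H(α,β) = p ≥ 2 such that no neighbor of α in the interval I_{Q_d}(α,β) belongs to Q_d(f), or no neighbor of β in I_{Q_d}(α,β) belongs to Q_d(f). -/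
/-- `occursAt u f k` : the string `f` occurs in `u` starting at (0-based)
position `k`. -/
def occursAt {d m : ℕ} (u : Fin d → Bool) (f : Fin m → Bool) (k : ℕ) : Prop :=
  ∃ _h : k + m ≤ d, ∀ i : Fin m, u ⟨k + i.1, by have := i.2; omega⟩ = f i

/-- `hasFactor u f` : `f` appears as a factor (consecutive bits) of `u`. -/
def hasFactor {d m : ℕ} (u : Fin d → Bool) (f : Fin m → Bool) : Prop :=
  ∃ k, occursAt u f k

/-- The `d`-dimensional hypercube `Q_d` on binary strings of length `d`. -/
def Qcube (d : ℕ) : SimpleGraph (Fin d → Bool) where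
  Adj α β := hammingDist α β = 1
  symm := ⟨by intro a b h; rwa [hammingDist_comm]⟩
  loopless := ⟨by intro a h; rw [hammingDist_self] at h; omega⟩

/-- The generalized Fibonacci cube `Q_d(f)`: the subgraph of `Q_d` induced on
the strings avoiding `f` as a factor. -/
def Qgraph (d : ℕ) {m : ℕ} (f : Fin m → Bool) :
    SimpleGraph {u : Fin d → Bool // ¬ hasFactor u f} where
  Adj a b := hammingDist a.1 b.1 = 1
  symm := ⟨by intro a b h; rwa [hammingDist_comm]⟩
  loopless := ⟨by intro a h; rw [hammingDist_self] at h; omega⟩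

/-- `Q_d(f)` is an isometric subgraph of `Q_d`: internal distances equal
Hamming distances. -/
def IsIsometric (d : ℕ) {m : ℕ} (f : Fin m → Bool) : Prop :=
  ∀ a b : {u : Fin d → Bool // ¬ hasFactor u f},
    (Qgraph d f).dist a b = hammingDist a.1 b.1

/-- `f` is good: `Q_d(f)` is isometric in `Q_d` for all `d ≥ 1`. -/
def Good {m : ℕ} (f : Fin m → Bool) : Prop := ∀ d, 1 ≤ d → IsIsometric d f

/-- `f` is bad: `Q_d(f)` is not isometric in `Q_d` for some `d ≥ 1`. -/
def Bad {m : ℕ} (f : Fin m → Bool) : Prop := ∃ d, 1 ≤ d ∧ ¬ IsIsometric d f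

/-- The index `B(f)`: the smallest `d` with `Q_d(f)` not isometric in `Q_d`. -/
noncomputable def Bindex {m : ℕ} (f : Fin m → Bool) : ℕ :=
  sInf {d | ¬ IsIsometric d f}

/-- Flip the `i`-th bit of `α`. -/
def flipBit {d : ℕ} (α : Fin d → Bool) (i : Fin d) : Fin d → Bool :=
  Function.update α i (!(α i))

/-- `α, β` are `p`-critical words for `Q_d(f)`. -/
def pCritical (d : ℕ) {m : ℕ} (f : Fin m → Bool) (p : ℕ)
    (α β : Fin d → Bool) : Prop :=
  ¬ hasFactor α f ∧ ¬ hasFactor β f ∧ hammingDist α β = p ∧ 2 ≤ p ∧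
    ((∀ i, α i ≠ β i → hasFactor (flipBit α i) f) ∨
     (∀ i, α i ≠ β i → hasFactor (flipBit β i) f))

/-- Lemma 2.1 (necessity): if `Q_d(f)` is not isometric in `Q_d`, then there
exist `p`-critical words for `Q_d(f)` for some `p ≥ 2`. -/
theorem stmt_5 (m d : ℕ) (hm : 0 < m) (hd : 1 ≤ d) (f : Fin m → Bool)
    (h : ¬ IsIsometric d f) :
    ∃ p, ∃ α β : Fin d → Bool, pCritical d f p α β := by
  classical
  -- any walk in Qgraph has length ≥ hamming distance of endpoints
  have walk_ge : ∀ (a b : {u : Fin d → Bool // ¬ hasFactor u f})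
      (w : (Qgraph d f).Walk a b), hammingDist a.1 b.1 ≤ w.length := by
    intro a b w
    induction w with
    | nil => simp
    | cons hadj w ih =>
      calc hammingDist _ _ ≤ hammingDist _ _ + hammingDist _ _ :=
            hammingDist_triangle _ _ _
        _ ≤ 1 + w.length := by
            exact Nat.add_le_add (le_of_eq hadj) ih
        _ = _ := by simp [Nat.add_comm]
  let P : ℕ → Prop := fun p => ∃ a b : {u : Fin d → Bool // ¬ hasFactor u f},
    (Qgraph d f).dist a b ≠ hammingDist a.1 b.1 ∧ hammingDist a.1 b.1 = p
  have hP : ∃ p, P p := by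
    simp only [IsIsometric, not_forall] at h
    obtain ⟨a, b, hab⟩ := h
    exact ⟨hammingDist a.1 b.1, a, b, hab, rfl⟩
  obtain ⟨α, β, hne, hH⟩ := Nat.find_spec hP
  set p := Nat.find hP with hp
  have hmin : ∀ q < p, ¬ P q := fun q hq => Nat.find_min hP hq
  -- p ≥ 2
  have hp2 : 2 ≤ p := by
    by_contra hlt
    interval_cases p
    · have : α.1 = β.1 := eq_of_hammingDist_eq_zero hH
      have : α = β := Subtype.ext this
      subst this
      simp at hne
    · have : (Qgraph d f).Adj α β := hH
      have := SimpleGraph.dist_eq_one_iff_adj.mpr this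
      omega
  refine ⟨p, α.1, β.1, α.2, β.2, hH, hp2, Or.inl ?_⟩
  intro i hi
  by_contra hγ
  set γ : Fin d → Bool := flipBit α.1 i with hγdef
  -- hamming facts
  have hβi : γ i = β.1 i := by
    simp only [hγdef, flipBit, Function.update_self]
    cases hα : α.1 i <;> cases hβ : β.1 i <;> simp_all
  have hγj : ∀ j, j ≠ i → γ j = α.1 j := by
    intro j hj; simp [hγdef, flipBit, Function.update_of_ne hj]
  have hHαγ : hammingDist α.1 γ = 1 := by
    have : ({j | α.1 j ≠ γ j} : Finset (Fin d)) = {i} := by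
      ext j
      simp only [Finset.mem_filter, Finset.mem_univ, true_and, Finset.mem_singleton]
      constructor
      · intro hj; by_contra hji; exact hj (hγj j hji).symm
      · rintro rfl
        simp [hγdef, flipBit, Function.update_self]
    simp [hammingDist, this]
  have hHγβ : hammingDist γ β.1 = p - 1 := by
    have hset : ({j | γ j ≠ β.1 j} : Finset (Fin d)) =
        ({j | α.1 j ≠ β.1 j} : Finset (Fin d)).erase i := by
      ext j
      simp only [Finset.mem_filter, Finset.mem_univ, true_and, Finset.mem_erase]
      by_cases hji : j = i
      · subst hji; simp [hβi]
      · simp [hγj j hji, hji]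
    have hi' : i ∈ ({j | α.1 j ≠ β.1 j} : Finset (Fin d)) := by
      simp [hi]
    calc hammingDist γ β.1 = (({j | α.1 j ≠ β.1 j} : Finset (Fin d)).erase i).card := by
          rw [hammingDist, hset]
      _ = ({j | α.1 j ≠ β.1 j} : Finset (Fin d)).card - 1 :=
          Finset.card_erase_of_mem hi'
      _ = p - 1 := by rw [← hH]; rfl
  set γ' : {u : Fin d → Bool // ¬ hasFactor u f} := ⟨γ, hγ⟩ with hγ'
  -- minimality: dist γ' β = p - 1
  have hdγβ : (Qgraph d f).dist γ' β = p - 1 := by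
    by_contra hc
    exact hmin (p - 1) (by omega) ⟨γ', β, by rw [hHγβ]; exact hc, hHγβ⟩
  have hreach : (Qgraph d f).dist γ' β ≠ 0 := by omega
  obtain ⟨w, hw⟩ := SimpleGraph.exists_walk_of_dist_ne_zero hreach
  have hadj : (Qgraph d f).Adj α γ' := hHαγ
  have hle : (Qgraph d f).dist α β ≤ p := by
    have := (Qgraph d f).dist_le (SimpleGraph.Walk.cons hadj w)
    simp only [SimpleGraph.Walk.length_cons, hw, hdγβ] at this
    omega
  have hge : p ≤ (Qgraph d f).dist α β := by
    have hne0 : (Qgraph d f).dist α β ≠ 0 := by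
      intro h0
      have hr : (Qgraph d f).Reachable α β :=
        ⟨SimpleGraph.Walk.cons hadj w⟩
      rw [hr.dist_eq_zero_iff] at h0
      rw [h0] at hH
      simp at hH
      omega
    obtain ⟨w', hw'⟩ := SimpleGraph.exists_walk_of_dist_ne_zero hne0
    have := walk_ge α β w'
    omega
  rw [hH] at hne
  omega
end

section
/- If f is a bad binary string and α, β are 2-critical words for Q_{B(f)}(f), then B(f) = |f| + r for some integer r with 1 ≤ r ≤ |f| - 2; if instead α, β are 3-critical words for Q_{B(f)}(f), then B(f) = |f| + 3r' for some integer r' with 3r' + 1 ≤ |f|. -/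
-- ### machinery
namespace S17

lemma bool_resolve (a x y : Bool) (P Q : Prop) [Decidable P] [Decidable Q]
    (hx : a = if P then !x else x) (hy : a = if Q then !y else y) :
    (x = y) ↔ (P ↔ Q) := by
  by_cases hP : P <;> by_cases hQ : Q <;>
    simp only [hP, hQ, if_true, if_false, if_pos, if_neg, not_false_iff] at hx hy <;>
    subst hx <;> (try simp [hy]) <;> (try tauto) <;>
    cases y <;> simp_all

lemma ham_filter {d : ℕ} (A B : Fin d → Bool) :
    hammingDist A B = (Finset.univ.filter (fun i => A i ≠ B i)).card := rfl

lemma flip_of_ham_one {d : ℕ} {A C : Fin d → Bool} (h : hammingDist A C = 1) :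
    ∃ i : Fin d, A i ≠ C i ∧ C = flipBit A i := by
  rw [ham_filter] at h
  obtain ⟨i0, hi0⟩ := Finset.card_eq_one.mp h
  have hmem : ∀ j : Fin d, (A j ≠ C j) ↔ j = i0 := by
    intro j
    have : j ∈ Finset.univ.filter (fun k => A k ≠ C k) ↔ j ∈ ({i0} : Finset (Fin d)) := by
      rw [hi0]
    simpa using this
  refine ⟨i0, (hmem i0).mpr rfl, ?_⟩
  funext j
  by_cases hj : j = i0
  · subst hj
    have hne := (hmem j).mpr rfl
    unfold flipBit
    rw [Function.update_self]
    revert hne; cases A j <;> cases C j <;> simp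
  · have : A j = C j := by
      by_contra hcon; exact hj ((hmem j).mp hcon)
    unfold flipBit
    rw [Function.update_of_ne hj]
    exact this.symm

lemma walk_ge {d m : ℕ} {f : Fin m → Bool} {a b : {u : Fin d → Bool // ¬ hasFactor u f}}
    (p : (Qgraph d f).Walk a b) : hammingDist a.1 b.1 ≤ p.length := by
  induction p with
  | nil => simp
  | cons h p ih =>
      rename_i u v w
      calc hammingDist u.1 w.1 ≤ hammingDist u.1 v.1 + hammingDist v.1 w.1 :=
            hammingDist_triangle _ _ _
        _ ≤ 1 + p.length := by
            have : hammingDist u.1 v.1 = 1 := h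
            omega
        _ = (SimpleGraph.Walk.cons h p).length := by simp [SimpleGraph.Walk.length_cons]; omega

lemma not_iso_of_crit {d m : ℕ} {f : Fin m → Bool} (A B : Fin d → Bool)
    (hA : ¬ hasFactor A f) (hB : ¬ hasFactor B f) (hne : A ≠ B)
    (hall : ∀ i, A i ≠ B i → hasFactor (flipBit A i) f) :
    ¬ IsIsometric d f := by
  intro hiso
  have hd := hiso ⟨A, hA⟩ ⟨B, hB⟩
  have hpos : 0 < hammingDist A B := by
    rcases Nat.eq_zero_or_pos (hammingDist A B) with h | h
    · exact absurd (hammingDist_eq_zero.mp h) hne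
    · exact h
  have hdist0 : (Qgraph d f).dist ⟨A, hA⟩ ⟨B, hB⟩ ≠ 0 := by
    rw [hd]; simpa using hpos.ne'
  obtain ⟨p, hp⟩ := SimpleGraph.exists_walk_of_dist_ne_zero hdist0
  rw [hd] at hp
  have hab : (⟨A, hA⟩ : {u : Fin d → Bool // ¬ hasFactor u f}) ≠ ⟨B, hB⟩ := by
    intro h; exact hne (congrArg Subtype.val h)
  obtain ⟨c, hadj, p', rfl⟩ := SimpleGraph.Walk.exists_eq_cons_of_ne hab p
  have hlen : p'.length + 1 = hammingDist A B := by
    simpa [SimpleGraph.Walk.length_cons] using hp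
  have hac : hammingDist A c.1 = 1 := hadj
  obtain ⟨i, hi, hflip⟩ := flip_of_ham_one hac
  have hcb : hammingDist c.1 B ≤ p'.length := walk_ge p'
  have hiAB : A i ≠ B i := by
    by_contra heq
    have hsub : insert i (Finset.univ.filter (fun j => A j ≠ B j)) ⊆
        Finset.univ.filter (fun j => c.1 j ≠ B j) := by
      intro j hj
      rcases Finset.mem_insert.mp hj with hj | hj
      · subst hj
        simp only [Finset.mem_filter, Finset.mem_univ, true_and]
        intro hcB
        exact hi (by rw [hcB, heq])
      · simp only [Finset.mem_filter, Finset.mem_univ, true_and] at hj ⊢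
        intro hcB
        have hcA : c.1 j = A j := by
          rw [hflip]
          unfold flipBit
          rw [Function.update_of_ne]
          intro hji; subst hji
          exact hi (by rw [hcB, heq])
        exact hj (by rw [← hcA, hcB])
    have hcard : hammingDist A B + 1 ≤ hammingDist c.1 B := by
      rw [ham_filter, ham_filter]
      have hnotmem : i ∉ Finset.univ.filter (fun j => A j ≠ B j) := by
        simp [heq]
      calc (Finset.univ.filter (fun j => A j ≠ B j)).card + 1
          = (insert i (Finset.univ.filter (fun j => A j ≠ B j))).card := by
            rw [Finset.card_insert_of_notMem hnotmem]
        _ ≤ _ := Finset.card_le_card hsub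
    omega
  have := hall i hiAB
  rw [← hflip] at this
  exact c.2 this
-- ### ℕ-level machinery

def fN {m : ℕ} (f : Fin m → Bool) : ℕ → Bool := fun j => if h : j < m then f ⟨j, h⟩ else false

def wN {d : ℕ} (u : Fin d → Bool) : ℕ → Bool := fun w => if h : w < d then u ⟨w, h⟩ else false

lemma hasFactorN {d m : ℕ} (u : Fin d → Bool) (f : Fin m → Bool) :
    hasFactor u f ↔ ∃ k, k + m ≤ d ∧ ∀ j, j < m → wN u (k + j) = fN f j := by
  constructor
  · rintro ⟨k, hkm, hocc⟩
    refine ⟨k, hkm, fun j hj => ?_⟩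
    have := hocc ⟨j, hj⟩
    unfold wN fN
    rw [dif_pos (by omega), dif_pos hj]
    exact this
  · rintro ⟨k, hkm, hocc⟩
    refine ⟨k, hkm, fun i => ?_⟩
    have := hocc i.1 i.2
    unfold wN fN at this
    rw [dif_pos (by have := i.2; omega), dif_pos i.2] at this
    exact this

lemma wN_flip {d : ℕ} (α : Fin d → Bool) (i : Fin d) (w : ℕ) (hw : w < d) :
    wN (flipBit α i) w = if w = i.1 then !(wN α w) else wN α w := by
  unfold wN flipBit
  rw [dif_pos hw]
  by_cases h : w = i.1
  · subst h
    rw [if_pos rfl, Function.update_self, dif_pos hw]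
  · rw [if_neg h, Function.update_of_ne (fun hc => h (congrArg Fin.val hc)), dif_pos hw]

/-- From `flipBit α t` containing `f`, extract a window containing `t` with the
one-defect formula. -/
lemma window_of_flip {d m : ℕ} {f : Fin m → Bool} {α : Fin d → Bool}
    (hα : ¬ hasFactor α f) {t : Fin d} (h : hasFactor (flipBit α t) f) :
    ∃ k, k ≤ t.1 ∧ t.1 < k + m ∧ k + m ≤ d ∧
      ∀ j, j < m → wN α (k + j) = if k + j = t.1 then !(fN f j) else fN f j := by
  rw [hasFactorN] at h
  obtain ⟨k, hkm, hocc⟩ := h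
  have hform : ∀ j, j < m → wN α (k + j) = if k + j = t.1 then !(fN f j) else fN f j := by
    intro j hj
    have h1 := hocc j hj
    rw [wN_flip α t (k+j) (by omega)] at h1
    by_cases hc : k + j = t.1
    · rw [if_pos hc] at h1 ⊢
      rw [← h1, Bool.not_not]
    · rw [if_neg hc] at h1 ⊢
      exact h1
  have ht : k ≤ t.1 ∧ t.1 < k + m := by
    by_contra hout
    apply hα
    rw [hasFactorN]
    refine ⟨k, hkm, fun j hj => ?_⟩
    have := hform j hj
    rw [if_neg (by omega)] at this
    exact this
  exact ⟨k, ht.1, ht.2, hkm, hform⟩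

/-- Minimality package: a 2-critical configuration inside a proper interval
`[l, r)` would contradict minimality, so the double-flipped word must contain
`f` inside the interval. -/
lemma pkg2 {d m : ℕ} {f : Fin m → Bool} {α : Fin d → Bool}
    (hα : ¬ hasFactor α f)
    (hmin : ∀ D, D < d → IsIsometric D f)
    (l r ka kb ta tb : ℕ)
    (hla : l ≤ ka) (hra : ka + m ≤ r) (hlb : l ≤ kb) (hrb : kb + m ≤ r)
    (hrd : r ≤ d) (hprop : r - l < d) (htab : ta ≠ tb)
    (hta1 : ka ≤ ta) (hta2 : ta < ka + m)
    (htb1 : kb ≤ tb) (htb2 : tb < kb + m)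
    (hwa : ∀ j, j < m → wN α (ka + j) = if ka + j = ta then !(fN f j) else fN f j)
    (hwb : ∀ j, j < m → wN α (kb + j) = if kb + j = tb then !(fN f j) else fN f j) :
    ∃ k, l ≤ k ∧ k + m ≤ r ∧
      ∀ j, j < m → (if k + j = ta ∨ k + j = tb then !(wN α (k + j)) else wN α (k + j)) = fN f j := by
  by_contra hno
  push_neg at hno
  set D := r - l with hD
  set A : Fin D → Bool := fun i => wN α (l + i.1) with hA
  set B : Fin D → Bool := fun i => if l + i.1 = ta ∨ l + i.1 = tb then !(A i) else A i with hB
  have hwNA : ∀ w, w < D → wN A w = wN α (l + w) := by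
    intro w hw
    unfold wN
    rw [dif_pos hw, dif_pos (by omega)]
    simp only [hA]
    unfold wN
    rw [dif_pos (by omega)]
  have hwNB : ∀ w, w < D → wN B w =
      if l + w = ta ∨ l + w = tb then !(wN α (l + w)) else wN α (l + w) := by
    intro w hw
    unfold wN
    rw [dif_pos hw]
    simp only [hB, hA]
    unfold wN
    rw [dif_pos (by omega)]
  have hAf : ¬ hasFactor A f := by
    rw [hasFactorN]
    rintro ⟨k, hkD, hk⟩
    apply hα
    rw [hasFactorN]
    refine ⟨l + k, by omega, fun j hj => ?_⟩
    have := hk j hj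
    rw [hwNA (k + j) (by omega)] at this
    rw [← this]; congr 1; omega
  have hBf : ¬ hasFactor B f := by
    rw [hasFactorN]
    rintro ⟨k, hkD, hk⟩
    obtain ⟨j, hj, hjc⟩ := hno (l + k) (by omega) (by omega)
    apply hjc
    have := hk j hj
    rw [hwNB (k + j) (by omega)] at this
    rw [← this]
    have harith : l + k + j = l + (k + j) := by omega
    rw [harith]
  have hneAB : A ≠ B := by
    intro hEq
    have hta' : ta - l < D := by omega
    have := congrFun hEq ⟨ta - l, hta'⟩
    simp only [hB] at this
    rw [if_pos (by left; omega)] at this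
    simpa using this
  have hall : ∀ i, A i ≠ B i → hasFactor (flipBit A i) f := by
    intro i hi
    have hiab : l + i.1 = ta ∨ l + i.1 = tb := by
      by_contra hc
      apply hi
      simp only [hB]
      rw [if_neg hc]
    rw [hasFactorN]
    rcases hiab with hia | hib
    · refine ⟨ka - l, by omega, fun j hj => ?_⟩
      rw [wN_flip A i (ka - l + j) (by omega)]
      have hidx : ka - l + j = i.1 ↔ ka + j = ta := by omega
      have hwa' := hwa j hj
      by_cases hc : ka + j = ta
      · rw [if_pos (hidx.mpr hc)]
        rw [hwNA (ka - l + j) (by omega)]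
        have harith : l + (ka - l + j) = ka + j := by omega
        rw [harith, hwa', if_pos hc, Bool.not_not]
      · rw [if_neg (fun hx => hc (hidx.mp hx))]
        rw [hwNA (ka - l + j) (by omega)]
        have harith : l + (ka - l + j) = ka + j := by omega
        rw [harith, hwa', if_neg hc]
    · refine ⟨kb - l, by omega, fun j hj => ?_⟩
      rw [wN_flip A i (kb - l + j) (by omega)]
      have hidx : kb - l + j = i.1 ↔ kb + j = tb := by omega
      have hwb' := hwb j hj
      by_cases hc : kb + j = tb
      · rw [if_pos (hidx.mpr hc)]
        rw [hwNA (kb - l + j) (by omega)]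
        have harith : l + (kb - l + j) = kb + j := by omega
        rw [harith, hwb', if_pos hc, Bool.not_not]
      · rw [if_neg (fun hx => hc (hidx.mp hx))]
        rw [hwNA (kb - l + j) (by omega)]
        have harith : l + (kb - l + j) = kb + j := by omega
        rw [harith, hwb', if_neg hc]
  exact not_iso_of_crit A B hAf hBf hneAB hall (hmin D hprop)
-- ### string combinatorics helpers

lemma flipout (x y : Bool) (C : Prop) [Decidable C]
    (h : (if C then !x else x) = y) : x = if C then !y else y := by
  by_cases hC : C <;> simp [hC] at h ⊢ <;> simp [← h]

lemma step2 {A F : ℕ → Bool} {w w' z1 z2 : ℕ} {P Q : Prop} [Decidable P] [Decidable Q]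
    (hx : A w = if P then !(F z1) else F z1)
    (hy : A w' = if Q then !(F z2) else F z2)
    (hww : w = w') : (F z1 = F z2) ↔ (P ↔ Q) := by
  rw [hww] at hx
  exact bool_resolve _ _ _ _ _ hx hy
lemma pkg3 {d m : ℕ} {f : Fin m → Bool} {α : Fin d → Bool}
    (hα : ¬ hasFactor α f)
    (hmin : ∀ D, D < d → IsIsometric D f)
    (l r ka kb kc ta tb tc : ℕ)
    (hla : l ≤ ka) (hra : ka + m ≤ r) (hlb : l ≤ kb) (hrb : kb + m ≤ r)
    (hlc : l ≤ kc) (hrc : kc + m ≤ r)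
    (hrd : r ≤ d) (hprop : r - l < d)
    (hta1 : ka ≤ ta) (hta2 : ta < ka + m)
    (htb1 : kb ≤ tb) (htb2 : tb < kb + m)
    (htc1 : kc ≤ tc) (htc2 : tc < kc + m)
    (hwa : ∀ j, j < m → wN α (ka + j) = if ka + j = ta then !(fN f j) else fN f j)
    (hwb : ∀ j, j < m → wN α (kb + j) = if kb + j = tb then !(fN f j) else fN f j)
    (hwc : ∀ j, j < m → wN α (kc + j) = if kc + j = tc then !(fN f j) else fN f j) :
    ∃ k, l ≤ k ∧ k + m ≤ r ∧
      ∀ j, j < m → (if k + j = ta ∨ k + j = tb ∨ k + j = tc then !(wN α (k + j)) else wN α (k + j)) = fN f j := by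
  by_contra hno
  push_neg at hno
  set D := r - l with hD
  set A : Fin D → Bool := fun i => wN α (l + i.1) with hA
  set B : Fin D → Bool := fun i =>
    if l + i.1 = ta ∨ l + i.1 = tb ∨ l + i.1 = tc then !(A i) else A i with hB
  have hwNA : ∀ w, w < D → wN A w = wN α (l + w) := by
    intro w hw
    unfold wN
    rw [dif_pos hw, dif_pos (by omega)]
    simp only [hA]
    unfold wN
    rw [dif_pos (by omega)]
  have hwNB : ∀ w, w < D → wN B w =
      if l + w = ta ∨ l + w = tb ∨ l + w = tc then !(wN α (l + w)) else wN α (l + w) := by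
    intro w hw
    unfold wN
    rw [dif_pos hw]
    simp only [hB, hA]
    unfold wN
    rw [dif_pos (by omega)]
  have hAf : ¬ hasFactor A f := by
    rw [hasFactorN]
    rintro ⟨k, hkD, hk⟩
    apply hα
    rw [hasFactorN]
    refine ⟨l + k, by omega, fun j hj => ?_⟩
    have := hk j hj
    rw [hwNA (k + j) (by omega)] at this
    rw [← this]; congr 1; omega
  have hBf : ¬ hasFactor B f := by
    rw [hasFactorN]
    rintro ⟨k, hkD, hk⟩
    obtain ⟨j, hj, hjc⟩ := hno (l + k) (by omega) (by omega)
    apply hjc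
    have := hk j hj
    rw [hwNB (k + j) (by omega)] at this
    rw [← this]
    have harith : l + k + j = l + (k + j) := by omega
    rw [harith]
  have hneAB : A ≠ B := by
    intro hEq
    have hta' : ta - l < D := by omega
    have := congrFun hEq ⟨ta - l, hta'⟩
    simp only [hB] at this
    rw [if_pos (by left; omega)] at this
    simpa using this
  have hall : ∀ i, A i ≠ B i → hasFactor (flipBit A i) f := by
    intro i hi
    have hiab : l + i.1 = ta ∨ l + i.1 = tb ∨ l + i.1 = tc := by
      by_contra hc
      apply hi
      simp only [hB]
      rw [if_neg hc]
    rw [hasFactorN]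
    have key : ∀ kk tt, l ≤ kk → kk + m ≤ r → l + i.1 = tt →
        (∀ j, j < m → wN α (kk + j) = if kk + j = tt then !(fN f j) else fN f j) →
        ∃ k, k + m ≤ D ∧ ∀ j, j < m → wN (flipBit A i) (k + j) = fN f j := by
      intro kk tt hlk hkr hit hw
      refine ⟨kk - l, by omega, fun j hj => ?_⟩
      rw [wN_flip A i (kk - l + j) (by omega)]
      have hidx : kk - l + j = i.1 ↔ kk + j = tt := by omega
      have hw' := hw j hj
      by_cases hc : kk + j = tt
      · rw [if_pos (hidx.mpr hc)]
        rw [hwNA (kk - l + j) (by omega)]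
        have harith : l + (kk - l + j) = kk + j := by omega
        rw [harith, hw', if_pos hc, Bool.not_not]
      · rw [if_neg (fun hx => hc (hidx.mp hx))]
        rw [hwNA (kk - l + j) (by omega)]
        have harith : l + (kk - l + j) = kk + j := by omega
        rw [harith, hw', if_neg hc]
    rcases hiab with h1 | h2 | h3
    · exact key ka ta hla hra h1 hwa
    · exact key kb tb hlb hrb h2 hwb
    · exact key kc tc hlc hrc h3 hwc
  exact not_iso_of_crit A B hAf hBf hneAB hall (hmin D hprop)

/-- The central string lemma: a 3-critical window configuration at the minimal
dimension forces `q = 3r'`. -/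
lemma core (m p q t1 t2 t3 : ℕ) (F A : ℕ → Bool)
    (hp : 0 < p) (hpq : p < q)
    (hw1 : ∀ z, z < m → A z = if z = t1 then !(F z) else F z)
    (hw2 : ∀ z, z < m → A (p + z) = if p + z = t2 then !(F z) else F z)
    (hw3 : ∀ z, z < m → A (q + z) = if q + z = t3 then !(F z) else F z)
    (ht1a : t1 < m) (ht2a : p ≤ t2) (ht2b : t2 < p + m)
    (ht3a : q ≤ t3) (ht3b : t3 < q + m)
    (h12 : t1 ≠ t2) (h13 : t1 ≠ t3) (h23 : t2 ≠ t3)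
    (hU : ∃ k, k ≤ p ∧ ∀ j, j < m →
      (if k + j = t1 ∨ k + j = t2 then !(A (k + j)) else A (k + j)) = F j)
    (hV : ∃ k, p ≤ k ∧ k ≤ q ∧ ∀ j, j < m →
      (if k + j = t2 ∨ k + j = t3 then !(A (k + j)) else A (k + j)) = F j)
    (hbeta : ∀ k, k ≤ q → ¬ ∀ j, j < m →
      (if k + j = t1 ∨ k + j = t2 ∨ k + j = t3 then !(A (k + j)) else A (k + j)) = F j) :
    ∃ r', 0 < r' ∧ q = 3 * r' ∧ q < m := by
  have hm : 0 < m := by omega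
  obtain ⟨u, hup, hUo⟩ := hU
  obtain ⟨v, hpv, hvq, hVo⟩ := hV
  -- additive window forms for U and V
  have hwU : ∀ z, z < m → A (u + z) = if u + z = t1 ∨ u + z = t2 then !(F z) else F z := by
    intro z hz; exact flipout _ _ _ (hUo z hz)
  have hwV : ∀ z, z < m → A (v + z) = if v + z = t2 ∨ v + z = t3 then !(F z) else F z := by
    intro z hz; exact flipout _ _ _ (hVo z hz)
  -- t3 lies in the U window
  have ht3U : u ≤ t3 ∧ t3 < u + m := by
    by_contra hc
    apply hbeta u (by omega)
    intro j hj
    have := hUo j hj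
    by_cases h1 : u + j = t1 ∨ u + j = t2
    · rw [if_pos h1] at this; rw [if_pos (by tauto)]; exact this
    · rw [if_neg h1] at this
      rw [if_neg (by push_neg at h1 ⊢; exact ⟨h1.1, h1.2, by omega⟩)]
      exact this
  -- t1 lies in the V window
  have ht1V : v ≤ t1 ∧ t1 < v + m := by
    by_contra hc
    apply hbeta v (by omega)
    intro j hj
    have := hVo j hj
    by_cases h1 : v + j = t2 ∨ v + j = t3
    · rw [if_pos h1] at this; rw [if_pos (by tauto)]; exact this
    · rw [if_neg h1] at this
      rw [if_neg (by push_neg at h1 ⊢; exact ⟨by omega, h1.1, h1.2⟩)]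
      exact this
  have ht1p : p ≤ t1 := by omega
  -- u ≠ p
  have hunp : u < p := by
    rcases Nat.lt_or_ge u p with h | h
    · exact h
    · exfalso
      have hu_eq : u = p := by omega
      subst hu_eq
      have h1 := hw2 (t1 - u) (by omega)
      have h2 := hwU (t1 - u) (by omega)
      have harith : u + (t1 - u) = t1 := by omega
      rw [harith] at h1 h2
      rw [if_neg (show ¬ (t1 = t2) from h12)] at h1
      rw [if_pos (show t1 = t1 ∨ t1 = t2 from Or.inl rfl)] at h2
      rw [h1] at h2; simp at h2
  -- v ≠ p
  have hvnp : p < v := by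
    rcases Nat.lt_or_ge p v with h | h
    · exact h
    · exfalso
      have hv_eq : v = p := by omega
      subst hv_eq
      have h1 := hw2 (t3 - v) (by omega)
      have h2 := hwV (t3 - v) (by omega)
      have harith : v + (t3 - v) = t3 := by omega
      rw [harith] at h1 h2
      rw [if_neg (show ¬ (t3 = t2) from fun h => h23 h.symm)] at h1
      rw [if_pos (show t3 = t2 ∨ t3 = t3 from Or.inr rfl)] at h2
      rw [h1] at h2; simp at h2
  -- main case split on t2
  rcases Nat.lt_or_ge t2 q with hC3 | hge
  · -- Case C3 : t2 < q
    have hqt1 : q ≤ t1 := by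
      by_contra hc
      push_neg at hc
      apply hbeta q (by omega)
      intro j hj
      have h3 := hw3 j hj
      by_cases hjt : q + j = t3
      · rw [if_pos (by omega), h3, if_pos hjt, Bool.not_not]
      · rw [if_neg (by omega), h3, if_neg hjt]
    have hqm : q < m := by omega
    have hu1 : 0 < u := by
      rcases Nat.eq_zero_or_pos u with h | h
      · exfalso
        subst h
        have h1 := hw1 t2 (by omega)
        have h2 := hwU t2 (by omega)
        have hz : (0:ℕ) + t2 = t2 := by omega
        rw [hz] at h2
        rw [if_neg (show ¬ (t2 = t1) from fun hx => h12 hx.symm)] at h1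
        rw [if_pos (show t2 = t1 ∨ t2 = t2 from Or.inr rfl)] at h2
        rw [h1] at h2; simp at h2
      · exact h
    obtain ⟨g, hg1, hpg⟩ : ∃ g, 0 < g ∧ p = u + g := ⟨p - u, by omega, by omega⟩
    obtain ⟨sg, hs1, hqs⟩ : ∃ sg, 0 < sg ∧ q = p + sg := ⟨q - p, by omega, by omega⟩
    obtain ⟨b1, hb1⟩ : ∃ b, t1 = q + b := ⟨t1 - q, by omega⟩
    have eL : F t1 ≠ F b1 := by
      have h := step2 (A := A) (hw1 t1 ht1a) (hw3 b1 (by omega)) (by omega)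
      intro hEq
      have := h.mp hEq
      omega
    -- chain (u,s,g) : t3 = t1 + g
    have s0 : F t1 = F (g+sg+b1) :=
      (step2 (A := A) (hw1 t1 ht1a) (hwU (g+sg+b1) (by omega)) (by omega)).mpr (by omega)
    have s2 : F (g+b1) = F b1 :=
      (step2 (A := A) (hwU (g+b1) (by omega)) (hw2 b1 (by omega)) (by omega)).mpr (by omega)
    have smid := step2 (A := A) (hw2 (g+sg+b1) (by omega)) (hw3 (g+b1) (by omega)) (by omega)
    have hmid1 : F (g+sg+b1) ≠ F (g+b1) := by
      intro h; apply eL; rw [s0, h, s2]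
    have ht3g : t3 = t1 + g := by
      have hni := mt smid.mpr hmid1
      omega
    -- chain (g,u,s) : t1 = t2 + g
    have s0' : F t1 = F (u+sg+b1) :=
      (step2 (A := A) (hwU t1 ht1a) (hw2 (u+sg+b1) (by omega)) (by omega)).mpr (by omega)
    have s2' : F (sg+b1) = F b1 :=
      (step2 (A := A) (hw2 (sg+b1) (by omega)) (hw3 b1 (by omega)) (by omega)).mpr (by omega)
    have smid' := step2 (A := A) (hw1 (u+sg+b1) (by omega)) (hwU (sg+b1) (by omega)) (by omega)
    have hmid2 : F (u+sg+b1) ≠ F (sg+b1) := by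
      intro h; apply eL; rw [s0', h, s2']
    have ht2g : t2 = u + sg + b1 := by
      have hni := mt smid'.mpr hmid2
      omega
    -- chain (g,s,u) : u = g
    have s2'' : F (u+b1) = F b1 :=
      (step2 (A := A) (hw1 (u+b1) (by omega)) (hwU b1 (by omega)) (by omega)).mpr (by omega)
    have smid'' := step2 (A := A) (hw2 (u+sg+b1) (by omega)) (hw3 (u+b1) (by omega)) (by omega)
    have hmid3 : F (u+sg+b1) ≠ F (u+b1) := by
      intro h; apply eL; rw [s0', h, s2'']
    have hug : u = g := by
      have hni := mt smid''.mpr hmid3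
      omega
    -- chain (s,g,u) : u = sg
    have s0''' : F t1 = F (u+g+b1) :=
      (step2 (A := A) (hw2 t1 ht1a) (hw3 (u+g+b1) (by omega)) (by omega)).mpr (by omega)
    have smid''' := step2 (A := A) (hwU (u+g+b1) (by omega)) (hw2 (u+b1) (by omega)) (by omega)
    have hmid4 : F (u+g+b1) ≠ F (u+b1) := by
      intro h; apply eL; rw [s0''', h, s2'']
    have husg : u = sg := by
      have hni := mt smid'''.mpr hmid4
      omega
    exact ⟨u, hu1, by omega, by omega⟩
  rcases Nat.lt_or_ge t2 m with hC2 | hC1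
  · -- Case C2 : q ≤ t2 < m : contradiction
    exfalso
    have hu1 : 0 < u := by
      rcases Nat.eq_zero_or_pos u with h | h
      · exfalso
        subst h
        have h1 := hw1 t2 (by omega)
        have h2 := hwU t2 (by omega)
        have hz : (0:ℕ) + t2 = t2 := by omega
        rw [hz] at h2
        rw [if_neg (show ¬ (t2 = t1) from fun hx => h12 hx.symm)] at h1
        rw [if_pos (show t2 = t1 ∨ t2 = t2 from Or.inr rfl)] at h2
        rw [h1] at h2; simp at h2
      · exact h
    have hvq' : v < q := by
      rcases Nat.lt_or_ge v q with h | h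
      · exact h
      · exfalso
        have hveq : v = q := by omega
        subst hveq
        have h1 := hw3 (t2 - v) (by omega)
        have h2 := hwV (t2 - v) (by omega)
        have harith : v + (t2 - v) = t2 := by omega
        rw [harith] at h1 h2
        rw [if_neg (show ¬ (t2 = t3) from h23)] at h1
        rw [if_pos (show t2 = t2 ∨ t2 = t3 from Or.inl rfl)] at h2
        rw [h1] at h2; simp at h2
    obtain ⟨g, hg1, hpg⟩ : ∃ g, 0 < g ∧ p = u + g := ⟨p - u, by omega, by omega⟩
    obtain ⟨e, he1, hve⟩ : ∃ e, 0 < e ∧ v = p + e := ⟨v - p, by omega, by omega⟩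
    obtain ⟨c, hc1, hqc⟩ : ∃ c, 0 < c ∧ q = v + c := ⟨q - v, by omega, by omega⟩
    obtain ⟨b2, hb2⟩ : ∃ b, t2 = q + b := ⟨t2 - q, by omega⟩
    have eL' : F t2 = F b2 :=
      (step2 (A := A) (hw1 t2 (by omega)) (hw3 b2 (by omega)) (by omega)).mpr (by omega)
    -- N1 : t1 = t2 + u
    have n1s : F (u+e+c+b2) = F (e+c+b2) :=
      (step2 (A := A) (hw1 (u+e+c+b2) (by omega)) (hwU (e+c+b2) (by omega)) (by omega)).mpr (by omega)
    have n2s : F (e+c+b2) = F (c+b2) :=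
      (step2 (A := A) (hw2 (e+c+b2) (by omega)) (hwV (c+b2) (by omega)) (by omega)).mpr (by omega)
    have n3step := step2 (A := A) (hwV (c+b2) (by omega)) (hw3 b2 (by omega)) (by omega)
    have n3s : F (c+b2) ≠ F b2 := by
      intro h
      have := n3step.mp h
      omega
    have smid0 := step2 (A := A) (hwU t2 (by omega)) (hw2 (u+e+c+b2) (by omega)) (by omega)
    have hne0 : F t2 ≠ F (u+e+c+b2) := by
      intro h
      apply n3s
      rw [← n2s, ← n1s, ← h]; exact eL'
    have ht1u : t1 = t2 + u := by
      have hni := mt smid0.mpr hne0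
      omega
    -- N2 : t2 + p ≠ t3
    have m1 : F (u+g+c+b2) = F (u+g+b2) :=
      (step2 (A := A) (hwV (u+g+c+b2) (by omega)) (hw3 (u+g+b2) (by omega)) (by omega)).mpr (by omega)
    have m2 : F (u+g+b2) = F (g+b2) :=
      (step2 (A := A) (hw1 (u+g+b2) (by omega)) (hwU (g+b2) (by omega)) (by omega)).mpr (by omega)
    have m3 : F (g+b2) = F b2 :=
      (step2 (A := A) (hwU (g+b2) (by omega)) (hw2 b2 (by omega)) (by omega)).mpr (by omega)
    have smidN2 := step2 (A := A) (hw2 t2 (by omega)) (hwV (u+g+c+b2) (by omega)) (by omega)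
    have hEqN2 : F t2 = F (u+g+c+b2) := by
      rw [m1, m2, m3]; exact eL'
    have hn2 : t2 + p ≠ t3 := by
      have h := smidN2.mp hEqN2
      omega
    -- N3 : contradiction
    have k1 : F (u+g+c+b2) = F (g+c+b2) :=
      (step2 (A := A) (hw1 (u+g+c+b2) (by omega)) (hwU (g+c+b2) (by omega)) (by omega)).mpr (by omega)
    have k2 : F (g+c+b2) = F (c+b2) :=
      (step2 (A := A) (hwU (g+c+b2) (by omega)) (hw2 (c+b2) (by omega)) (by omega)).mpr (by omega)
    apply n3s
    rw [← k2, ← k1, ← hEqN2]; exact eL'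
  · -- Case C1 : m ≤ t2
    have ht3m : t3 < m := by
      by_contra hc
      push_neg at hc
      apply hbeta 0 (by omega)
      intro j hj
      have h1 := hw1 j hj
      have hz : (0:ℕ) + j = j := by omega
      rw [hz]
      by_cases hjt : j = t1
      · rw [if_pos (by omega), h1, if_pos hjt, Bool.not_not]
      · rw [if_neg (by omega), h1, if_neg hjt]
    have hqm : q < m := by omega
    have hvq' : v < q := by
      rcases Nat.lt_or_ge v q with h | h
      · exact h
      · exfalso
        have hveq : v = q := by omega
        subst hveq
        have h1 := hw3 (t2 - v) (by omega)
        have h2 := hwV (t2 - v) (by omega)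
        have harith : v + (t2 - v) = t2 := by omega
        rw [harith] at h1 h2
        rw [if_neg (show ¬ (t2 = t3) from h23)] at h1
        rw [if_pos (show t2 = t2 ∨ t2 = t3 from Or.inl rfl)] at h2
        rw [h1] at h2; simp at h2
    obtain ⟨e, he1, hve⟩ : ∃ e, 0 < e ∧ v = p + e := ⟨v - p, by omega, by omega⟩
    obtain ⟨c, hc1, hqc⟩ : ∃ c, 0 < c ∧ q = v + c := ⟨q - v, by omega, by omega⟩
    obtain ⟨b0, hb0⟩ : ∃ b, t3 = q + b := ⟨t3 - q, by omega⟩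
    -- endpoint inequality
    have eL : F t3 ≠ F b0 := by
      have h := step2 (A := A) (hw1 t3 ht3m) (hw3 b0 (by omega)) (by omega)
      intro hEq
      have := h.mp hEq
      omega
    -- chain ♠ : t2 = t3 + e
    have s0 : F t3 = F (e+c+b0) :=
      (step2 (A := A) (hw1 t3 ht3m) (hw2 (e+c+b0) (by omega)) (by omega)).mpr (by omega)
    have s2 : F (e+b0) = F b0 :=
      (step2 (A := A) (hw2 (e+b0) (by omega)) (hwV b0 (by omega)) (by omega)).mpr (by omega)
    have smid := step2 (A := A) (hwV (e+c+b0) (by omega)) (hw3 (e+b0) (by omega)) (by omega)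
    have hmid1 : F (e+c+b0) ≠ F (e+b0) := by
      intro h; apply eL; rw [s0, h, s2]
    have ht2e : t2 = t3 + e := by
      have hni := mt smid.mpr hmid1
      omega
    -- chain ♦₂ : t1 = p + c + b0
    have s0' : F t3 = F (p+c+b0) :=
      (step2 (A := A) (hw2 t3 ht3m) (hwV (p+c+b0) (by omega)) (by omega)).mpr (by omega)
    have s2' : F (c+b0) = F b0 :=
      (step2 (A := A) (hwV (c+b0) (by omega)) (hw3 b0 (by omega)) (by omega)).mpr (by omega)
    have smid' := step2 (A := A) (hw1 (p+c+b0) (by omega)) (hw2 (c+b0) (by omega)) (by omega)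
    have hmid2 : F (p+c+b0) ≠ F (c+b0) := by
      intro h; apply eL; rw [s0', h, s2']
    have ht1e : t1 = p + c + b0 := by
      have hni := mt smid'.mpr hmid2
      omega
    -- chain ♥ : t1 = p + e + b0, hence e = c
    have s0'' : F t3 = F (p+e+b0) :=
      (step2 (A := A) (hwV t3 ht3m) (hw3 (p+e+b0) (by omega)) (by omega)).mpr (by omega)
    have smid'' := step2 (A := A) (hw1 (p+e+b0) (by omega)) (hw2 (e+b0) (by omega)) (by omega)
    have hmid3 : F (p+e+b0) ≠ F (e+b0) := by
      intro h; apply eL; rw [s0'', h, s2]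
    have ht1c : t1 = p + e + b0 := by
      have hni := mt smid''.mpr hmid3
      omega
    have hec : e = c := by omega
    -- chain ♣ : p = c
    have s2''' : F (p+b0) = F b0 :=
      (step2 (A := A) (hw1 (p+b0) (by omega)) (hw2 b0 (by omega)) (by omega)).mpr (by omega)
    have smid''' := step2 (A := A) (hw2 (p+e+b0) (by omega)) (hwV (p+b0) (by omega)) (by omega)
    have hmid4 : F (p+e+b0) ≠ F (p+b0) := by
      intro h; apply eL; rw [s0'', h, s2''']
    have hpc : p = c := by
      have hni := mt smid'''.mpr hmid4
      omega
    exact ⟨p, hp, by omega, by omega⟩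
-- ### extraction helpers

lemma m_pos {d m : ℕ} {f : Fin m → Bool} {α : Fin d → Bool} (hα : ¬ hasFactor α f) : 0 < m := by
  rcases Nat.eq_zero_or_pos m with h | h
  · exfalso
    apply hα
    subst h
    exact ⟨0, by omega, fun i => i.elim0⟩
  · exact h

lemma ham_two {d : ℕ} {A B : Fin d → Bool} (h : hammingDist A B = 2) :
    ∃ i j : Fin d, i ≠ j ∧ ∀ k : Fin d, (A k ≠ B k ↔ (k = i ∨ k = j)) := by
  rw [ham_filter] at h
  obtain ⟨i, j, hij, hset⟩ := Finset.card_eq_two.mp h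
  refine ⟨i, j, hij, fun k => ?_⟩
  have : k ∈ Finset.univ.filter (fun t => A t ≠ B t) ↔ k ∈ ({i, j} : Finset (Fin d)) := by
    rw [hset]
  simpa using this

lemma ham_three {d : ℕ} {A B : Fin d → Bool} (h : hammingDist A B = 3) :
    ∃ x y z : Fin d, x ≠ y ∧ x ≠ z ∧ y ≠ z ∧
      ∀ k : Fin d, (A k ≠ B k ↔ (k = x ∨ k = y ∨ k = z)) := by
  rw [ham_filter] at h
  obtain ⟨x, y, z, hxy, hxz, hyz, hset⟩ := Finset.card_eq_three.mp h
  refine ⟨x, y, z, hxy, hxz, hyz, fun k => ?_⟩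
  have : k ∈ Finset.univ.filter (fun t => A t ≠ B t) ↔ k ∈ ({x, y, z} : Finset (Fin d)) := by
    rw [hset]
  simpa using this

lemma bool_ne_flip {a b : Bool} (h : a ≠ b) : b = !a := by
  cases a <;> cases b <;> simp_all

lemma win_clash {d m : ℕ} {α : Fin d → Bool} {f : Fin m → Bool} (k ta tb : ℕ)
    (hne : ta ≠ tb) (hta : k ≤ ta) (hta2 : ta < k + m)
    (hwa : ∀ j, j < m → wN α (k+j) = if k+j = ta then !(fN f j) else fN f j)
    (hwb : ∀ j, j < m → wN α (k+j) = if k+j = tb then !(fN f j) else fN f j) : False := by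
  have h1 := hwa (ta - k) (by omega)
  have h2 := hwb (ta - k) (by omega)
  have harith : k + (ta - k) = ta := by omega
  rw [harith] at h1 h2
  rw [if_pos rfl] at h1
  rw [if_neg hne] at h2
  rw [h2] at h1
  simp at h1
-- ### branch 1 : 2-critical words

lemma branch1core {d m : ℕ} {f : Fin m → Bool} {α β : Fin d → Bool}
    (hα : ¬ hasFactor α f) (hβ : ¬ hasFactor β f)
    (hmin : ∀ D, D < d → IsIsometric D f)
    (a b ti tj : ℕ) (hab : a < b) (hij : ti ≠ tj)
    (hta1 : a ≤ ti) (hta2 : ti < a + m) (ham : a + m ≤ d)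
    (htb1 : b ≤ tj) (htb2 : tj < b + m) (hbm : b + m ≤ d)
    (hwa : ∀ j, j < m → wN α (a+j) = if a+j = ti then !(fN f j) else fN f j)
    (hwb : ∀ j, j < m → wN α (b+j) = if b+j = tj then !(fN f j) else fN f j)
    (hbform : ∀ w, w < d → wN β w = if w = ti ∨ w = tj then !(wN α w) else wN α w) :
    ∃ r, 1 ≤ r ∧ r ≤ m - 2 ∧ d = m + r := by
  have hm : 0 < m := m_pos hα
  -- tj lies in window a
  have htja : a ≤ tj ∧ tj < a + m := by
    by_contra hc
    apply hβ
    rw [hasFactorN]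
    refine ⟨a, ham, fun j hj => ?_⟩
    rw [hbform (a+j) (by omega)]
    have h1 := hwa j hj
    by_cases hcc : a + j = ti
    · rw [if_pos (Or.inl hcc), h1, if_pos hcc, Bool.not_not]
    · rw [if_neg (by omega), h1, if_neg hcc]
  -- ti lies in window b
  have htib : b ≤ ti ∧ ti < b + m := by
    by_contra hc
    apply hβ
    rw [hasFactorN]
    refine ⟨b, hbm, fun j hj => ?_⟩
    rw [hbform (b+j) (by omega)]
    have h1 := hwb j hj
    by_cases hcc : b + j = tj
    · rw [if_pos (Or.inr hcc), h1, if_pos hcc, Bool.not_not]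
    · rw [if_neg (by omega), h1, if_neg hcc]
  -- a = 0
  have ha0 : a = 0 := by
    by_contra ha
    obtain ⟨k, hk1, hkm, hocc⟩ := pkg2 hα hmin 1 d a b ti tj (by omega) (by omega)
      (by omega) (by omega) (by omega) (by omega) hij hta1 hta2 htb1 htb2 hwa hwb
    apply hβ
    rw [hasFactorN]
    refine ⟨k, by omega, fun j hj => ?_⟩
    rw [hbform (k+j) (by omega)]
    exact hocc j hj
  -- b + m = d
  have hbd : b + m = d := by
    by_contra hb
    obtain ⟨k, hk1, hkm, hocc⟩ := pkg2 hα hmin 0 (d-1) a b ti tj (by omega) (by omega)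
      (by omega) (by omega) (by omega) (by omega) hij hta1 hta2 htb1 htb2 hwa hwb
    apply hβ
    rw [hasFactorN]
    refine ⟨k, by omega, fun j hj => ?_⟩
    rw [hbform (k+j) (by omega)]
    exact hocc j hj
  exact ⟨b, by omega, by omega, by omega⟩

lemma twocrit {d m : ℕ} {f : Fin m → Bool} (α β : Fin d → Bool)
    (hα : ¬ hasFactor α f) (hβ : ¬ hasFactor β f)
    (hh : hammingDist α β = 2)
    (hflips : ∀ i, α i ≠ β i → hasFactor (flipBit α i) f)
    (hmin : ∀ D, D < d → IsIsometric D f) :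
    ∃ r, 1 ≤ r ∧ r ≤ m - 2 ∧ d = m + r := by
  obtain ⟨i, j, hij, hiff⟩ := ham_two hh
  obtain ⟨a, ha1, ha2, ham, hwa⟩ := window_of_flip hα (hflips i ((hiff i).mpr (Or.inl rfl)))
  obtain ⟨b, hb1, hb2, hbm, hwb⟩ := window_of_flip hα (hflips j ((hiff j).mpr (Or.inr rfl)))
  have hijv : i.1 ≠ j.1 := fun h => hij (Fin.ext h)
  have hbform : ∀ w, w < d → wN β w = if w = i.1 ∨ w = j.1 then !(wN α w) else wN α w := by
    intro w hw
    have hiffw := hiff ⟨w, hw⟩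
    unfold wN
    rw [dif_pos hw, dif_pos hw]
    by_cases hc : w = i.1 ∨ w = j.1
    · rw [if_pos hc]
      have : α ⟨w, hw⟩ ≠ β ⟨w, hw⟩ := by
        apply hiffw.mpr
        rcases hc with h | h
        · exact Or.inl (Fin.ext h)
        · exact Or.inr (Fin.ext h)
      exact bool_ne_flip this
    · rw [if_neg hc]
      by_contra hne
      have := hiffw.mp (fun hx => hne hx.symm)
      rcases this with h | h
      · exact hc (Or.inl (congrArg Fin.val h))
      · exact hc (Or.inr (congrArg Fin.val h))
  rcases Nat.lt_trichotomy a b with h | h | h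
  · exact branch1core hα hβ hmin a b i.1 j.1 h hijv ha1 ha2 ham hb1 hb2 hbm hwa hwb hbform
  · exfalso
    subst h
    exact win_clash a i.1 j.1 hijv ha1 ha2 hwa hwb
  · have hbform' : ∀ w, w < d → wN β w = if w = j.1 ∨ w = i.1 then !(wN α w) else wN α w := by
      intro w hw
      rw [hbform w hw]
      by_cases hc : w = i.1 ∨ w = j.1
      · rw [if_pos hc, if_pos (by tauto)]
      · rw [if_neg hc, if_neg (by tauto)]
    exact branch1core hα hβ hmin b a j.1 i.1 h (Ne.symm hijv) hb1 hb2 hbm ha1 ha2 ham hwb hwa hbform'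
-- ### branch 2 : 3-critical words

lemma threecore {d m : ℕ} {f : Fin m → Bool} {α β : Fin d → Bool}
    (hα : ¬ hasFactor α f) (hβ : ¬ hasFactor β f)
    (hmin : ∀ D, D < d → IsIsometric D f)
    (k1 k2 k3 t1 t2 t3 : ℕ) (h12k : k1 < k2) (h23k : k2 < k3)
    (h12 : t1 ≠ t2) (h13 : t1 ≠ t3) (h23 : t2 ≠ t3)
    (ht1a : k1 ≤ t1) (ht1b : t1 < k1 + m) (h1m : k1 + m ≤ d)
    (ht2a : k2 ≤ t2) (ht2b : t2 < k2 + m) (h2m : k2 + m ≤ d)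
    (ht3a : k3 ≤ t3) (ht3b : t3 < k3 + m) (h3m : k3 + m ≤ d)
    (hw1 : ∀ j, j < m → wN α (k1+j) = if k1+j = t1 then !(fN f j) else fN f j)
    (hw2 : ∀ j, j < m → wN α (k2+j) = if k2+j = t2 then !(fN f j) else fN f j)
    (hw3 : ∀ j, j < m → wN α (k3+j) = if k3+j = t3 then !(fN f j) else fN f j)
    (hbform : ∀ w, w < d → wN β w =
      if w = t1 ∨ w = t2 ∨ w = t3 then !(wN α w) else wN α w) :
    ∃ r', 3 * r' + 1 ≤ m ∧ d = m + 3 * r' := by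
  have hm : 0 < m := m_pos hα
  -- k1 = 0
  have hk10 : k1 = 0 := by
    by_contra hk
    obtain ⟨k, hk1, hkm, hocc⟩ := pkg3 hα hmin 1 d k1 k2 k3 t1 t2 t3 (by omega) (by omega)
      (by omega) (by omega) (by omega) (by omega) (by omega) (by omega)
      ht1a ht1b ht2a ht2b ht3a ht3b hw1 hw2 hw3
    apply hβ
    rw [hasFactorN]
    refine ⟨k, by omega, fun j hj => ?_⟩
    rw [hbform (k+j) (by omega)]
    exact hocc j hj
  -- k3 + m = d
  have hk3d : k3 + m = d := by
    by_contra hk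
    obtain ⟨k, hk1, hkm, hocc⟩ := pkg3 hα hmin 0 (d-1) k1 k2 k3 t1 t2 t3 (by omega) (by omega)
      (by omega) (by omega) (by omega) (by omega) (by omega) (by omega)
      ht1a ht1b ht2a ht2b ht3a ht3b hw1 hw2 hw3
    apply hβ
    rw [hasFactorN]
    refine ⟨k, by omega, fun j hj => ?_⟩
    rw [hbform (k+j) (by omega)]
    exact hocc j hj
  subst hk10
  -- occurrences U and V from minimality
  obtain ⟨u, hu0, hum, hUo⟩ := pkg2 hα hmin 0 (k2+m) 0 k2 t1 t2 (by omega) (by omega)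
    (by omega) (by omega) (by omega) (by omega) h12 ht1a ht1b ht2a ht2b hw1 hw2
  obtain ⟨v, hv0, hvm, hVo⟩ := pkg2 hα hmin k2 d k2 k3 t2 t3 (by omega) (by omega)
    (by omega) (by omega) (by omega) (by omega) h23 ht2a ht2b ht3a ht3b hw2 hw3
  -- apply the core string lemma
  have hw1' : ∀ z, z < m → wN α z = if z = t1 then !(fN f z) else fN f z := by
    intro z hz
    have h := hw1 z hz
    rwa [show (0:ℕ)+z = z from by omega] at h
  have hcore := core m k2 k3 t1 t2 t3 (fN f) (wN α) (by omega) h23k hw1' hw2 hw3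
    (by omega) ht2a ht2b ht3a ht3b h12 h13 h23
    ⟨u, by omega, fun j hj => by
      have h := hUo j hj
      exact h⟩
    ⟨v, by omega, by omega, fun j hj => hVo j hj⟩
    (by
      intro k hk hocc
      apply hβ
      rw [hasFactorN]
      refine ⟨k, by omega, fun j hj => ?_⟩
      rw [hbform (k+j) (by omega)]
      exact hocc j hj)
  obtain ⟨r', hr1, hr2, hr3⟩ := hcore
  exact ⟨r', by omega, by omega⟩
lemma bform_swap {d : ℕ} {A B : ℕ → Bool} {x y z a b c : ℕ}
    (hperm : ∀ w : ℕ, (w = x ∨ w = y ∨ w = z) ↔ (w = a ∨ w = b ∨ w = c))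
    (h : ∀ w, w < d → B w = if w = x ∨ w = y ∨ w = z then !(A w) else A w) :
    ∀ w, w < d → B w = if w = a ∨ w = b ∨ w = c then !(A w) else A w := by
  intro w hw
  rw [h w hw]
  by_cases hc : w = x ∨ w = y ∨ w = z
  · rw [if_pos hc, if_pos ((hperm w).mp hc)]
  · rw [if_neg hc, if_neg (fun hcc => hc ((hperm w).mpr hcc))]

lemma threecrit {d m : ℕ} {f : Fin m → Bool} (α β : Fin d → Bool)
    (hα : ¬ hasFactor α f) (hβ : ¬ hasFactor β f)
    (hh : hammingDist α β = 3)
    (hflips : ∀ i, α i ≠ β i → hasFactor (flipBit α i) f)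
    (hmin : ∀ D, D < d → IsIsometric D f) :
    ∃ r', 3 * r' + 1 ≤ m ∧ d = m + 3 * r' := by
  obtain ⟨x, y, z, hxy, hxz, hyz, hiff⟩ := ham_three hh
  obtain ⟨kx, hx1, hx2, hxm, hwx⟩ := window_of_flip hα (hflips x ((hiff x).mpr (Or.inl rfl)))
  obtain ⟨ky, hy1, hy2, hym, hwy⟩ := window_of_flip hα (hflips y ((hiff y).mpr (Or.inr (Or.inl rfl))))
  obtain ⟨kz, hz1, hz2, hzm, hwz⟩ := window_of_flip hα (hflips z ((hiff z).mpr (Or.inr (Or.inr rfl))))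
  have hxyv : x.1 ≠ y.1 := fun h => hxy (Fin.ext h)
  have hxzv : x.1 ≠ z.1 := fun h => hxz (Fin.ext h)
  have hyzv : y.1 ≠ z.1 := fun h => hyz (Fin.ext h)
  have hbform : ∀ w, w < d → wN β w =
      if w = x.1 ∨ w = y.1 ∨ w = z.1 then !(wN α w) else wN α w := by
    intro w hw
    have hiffw := hiff ⟨w, hw⟩
    unfold wN
    rw [dif_pos hw, dif_pos hw]
    by_cases hc : w = x.1 ∨ w = y.1 ∨ w = z.1
    · rw [if_pos hc]
      have : α ⟨w, hw⟩ ≠ β ⟨w, hw⟩ := by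
        apply hiffw.mpr
        rcases hc with h | h | h
        · exact Or.inl (Fin.ext h)
        · exact Or.inr (Or.inl (Fin.ext h))
        · exact Or.inr (Or.inr (Fin.ext h))
      exact bool_ne_flip this
    · rw [if_neg hc]
      by_contra hne
      have := hiffw.mp (fun hh2 => hne hh2.symm)
      rcases this with h | h | h
      · exact hc (Or.inl (congrArg Fin.val h))
      · exact hc (Or.inr (Or.inl (congrArg Fin.val h)))
      · exact hc (Or.inr (Or.inr (congrArg Fin.val h)))
  have hkxy : kx ≠ ky := by
    intro h; subst h; exact win_clash kx x.1 y.1 hxyv hx1 hx2 hwx hwy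
  have hkxz : kx ≠ kz := by
    intro h; subst h; exact win_clash kx x.1 z.1 hxzv hx1 hx2 hwx hwz
  have hkyz : ky ≠ kz := by
    intro h; subst h; exact win_clash ky y.1 z.1 hyzv hy1 hy2 hwy hwz
  rcases Nat.lt_trichotomy kx ky with h1 | h1 | h1
  · rcases Nat.lt_trichotomy ky kz with h2 | h2 | h2
    · -- kx < ky < kz
      exact threecore hα hβ hmin kx ky kz x.1 y.1 z.1 h1 h2 hxyv hxzv hyzv
        hx1 hx2 hxm hy1 hy2 hym hz1 hz2 hzm hwx hwy hwz hbform
    · exact absurd h2 hkyz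
    · rcases Nat.lt_trichotomy kx kz with h3 | h3 | h3
      · -- kx < kz < ky
        exact threecore hα hβ hmin kx kz ky x.1 z.1 y.1 h3 h2 hxzv hxyv (Ne.symm hyzv)
          hx1 hx2 hxm hz1 hz2 hzm hy1 hy2 hym hwx hwz hwy (bform_swap (by tauto) hbform)
      · exact absurd h3 hkxz
      · -- kz < kx < ky
        exact threecore hα hβ hmin kz kx ky z.1 x.1 y.1 h3 h1 (Ne.symm hxzv) (Ne.symm hyzv) hxyv
          hz1 hz2 hzm hx1 hx2 hxm hy1 hy2 hym hwz hwx hwy (bform_swap (by tauto) hbform)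
  · exact absurd h1 hkxy
  · rcases Nat.lt_trichotomy kx kz with h2 | h2 | h2
    · -- ky < kx < kz
      exact threecore hα hβ hmin ky kx kz y.1 x.1 z.1 h1 h2 (Ne.symm hxyv) hyzv hxzv
        hy1 hy2 hym hx1 hx2 hxm hz1 hz2 hzm hwy hwx hwz (bform_swap (by tauto) hbform)
    · exact absurd h2 hkxz
    · rcases Nat.lt_trichotomy ky kz with h3 | h3 | h3
      · -- ky < kz < kx
        exact threecore hα hβ hmin ky kz kx y.1 z.1 x.1 h3 h2 hyzv (Ne.symm hxyv) (Ne.symm hxzv)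
          hy1 hy2 hym hz1 hz2 hzm hx1 hx2 hxm hwy hwz hwx (bform_swap (by tauto) hbform)
      · exact absurd h3 hkyz
      · -- kz < ky < kx
        exact threecore hα hβ hmin kz ky kx z.1 y.1 x.1 h3 h1 (Ne.symm hyzv) (Ne.symm hxzv) (Ne.symm hxyv)
          hz1 hz2 hzm hy1 hy2 hym hx1 hx2 hxm hwz hwy hwx (bform_swap (by tauto) hbform)

end S17


/-- Note 3.5: if `α, β` are `2`-critical words for `Q_{B(f)}(f)` then
`B(f) = |f| + r` with `1 ≤ r ≤ |f| - 2`; if they are `3`-critical words then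
`B(f) = |f| + 3r'` with `3r' + 1 ≤ |f|`. -/
theorem stmt_17 (m : ℕ) (f : Fin m → Bool) (hBad : Bad f)
    (α β : Fin (Bindex f) → Bool) :
    (pCritical (Bindex f) f 2 α β →
      ∃ r, 1 ≤ r ∧ r ≤ m - 2 ∧ Bindex f = m + r) ∧
    (pCritical (Bindex f) f 3 α β →
      ∃ r', 3 * r' + 1 ≤ m ∧ Bindex f = m + 3 * r') := by
  classical
  have hsetne : {dd | ¬ IsIsometric dd f}.Nonempty := by
    obtain ⟨d0, _, hd0⟩ := hBad
    exact ⟨d0, hd0⟩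
  have hmin : ∀ D, D < Bindex f → IsIsometric D f := by
    intro D hD
    by_contra hc
    have : Bindex f ≤ D := Nat.sInf_le hc
    omega
  constructor
  · intro hcrit
    obtain ⟨hα, hβ, hh, -, hside | hside⟩ := hcrit
    · exact S17.twocrit α β hα hβ hh hside hmin
    · exact S17.twocrit β α hβ hα (by rwa [hammingDist_comm]) (fun i hi => hside i (Ne.symm hi)) hmin
  · intro hcrit
    obtain ⟨hα, hβ, hh, -, hside | hside⟩ := hcrit
    · exact S17.threecrit α β hα hβ hh hside hmin
    · exact S17.threecrit β α hβ hα (by rwa [hammingDist_comm]) (fun i hi => hside i (Ne.symm hi)) hmin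
end

section
/- Let r, s be positive integers with g = gcd(r,s), and let f be a binary string with |f| > r + s - g and t ≤ |f| + g - r - s. Suppose the equations f_{t+(i-1)g} = f_{t+(i-1)g+s} hold for all i ∈ {1,...,r/g} \ {i_1} and the equations f_{t+(j-1)g} = f_{t+(j-1)g+r} hold for all j ∈ {1,...,s/g} \ {j_1}. Then f_{t+(i_1-1)g} = f_{t+(j_1-1)g} and f_{t+(i_1-1)g+s} = f_{t+(j_1-1)g+r}. -/
lemma aux19 (n t g a b : ℕ) (hg : 0 < g) (ha : 0 < a) (hb : 0 < b)
    (hab : Nat.Coprime a b) (ht : 0 < t) (hbound : t + (a + b - 1) * g ≤ n)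
    (f : Fin n → Bool) (u w : ℕ) (hu : u < a) (hw : a ≤ w) (hwm : w < a + b)
    (h2 : ∀ x < a, x ≠ u → bitEq f (t + x * g) (t + x * g + b * g))
    (h3 : ∀ x, a ≤ x → x < a + b → x ≠ w →
      bitEq f (t + (x - a) * g) (t + (x - a) * g + a * g)) :
    bitEq f (t + u * g) (t + (w - a) * g) ∧ bitEq f (t + (u + b) * g) (t + w * g) := by
  set m := a + b with hm
  have hmpos : 0 < m := by omega
  set P : ℕ → Bool := fun x => if h : t + x * g - 1 < n then f ⟨t + x * g - 1, h⟩ else false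
    with hP
  have hlt : ∀ x, x < m → t + x * g - 1 < n := by
    intro x hx
    have : x * g ≤ (m - 1) * g := Nat.mul_le_mul_right g (by omega)
    omega
  have P_of : ∀ x y, x < m → y < m → bitEq f (t + x * g) (t + y * g) → P x = P y := by
    intro x y hx hy h
    simp only [hP, dif_pos (hlt x hx), dif_pos (hlt y hy)]
    exact h _ _
  have of_P : ∀ x y, x < m → y < m → P x = P y → bitEq f (t + x * g) (t + y * g) := by
    intro x y hx hy h hp hq
    simp only [hP, dif_pos (hlt x hx), dif_pos (hlt y hy)] at h
    exact h
  -- the edge lemma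
  have edge : ∀ x, x < m → x ≠ u → x ≠ w → P x = P ((x + b) % m) := by
    intro x hx hxu hxw
    by_cases hxa : x < a
    · have h := h2 x hxa hxu
      have hxb : (x + b) % m = x + b := Nat.mod_eq_of_lt (by omega)
      rw [hxb]
      apply P_of x (x + b) hx (by omega)
      have : t + (x + b) * g = t + x * g + b * g := by ring
      rw [this]; exact h
    · have h := h3 x (by omega) hx hxw
      have hxb : (x + b) % m = x - a := by
        have h1 : x + b = (x - a) + m := by omega
        rw [h1, Nat.add_mod_right]
        exact Nat.mod_eq_of_lt (by omega)
      rw [hxb]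
      have : t + (x - a) * g + a * g = t + x * g := by
        have : (x - a) * g + a * g = x * g := by
          rw [← Nat.add_mul]; congr 1; omega
        omega
      rw [this] at h
      symm
      exact P_of _ x (by omega) hx h
  set v := w - a with hv
  -- injectivity of k ↦ (v + k*b) % m on [0,m)
  have hmb : Nat.Coprime m b := Nat.coprime_add_self_left.mpr hab
  have inj : ∀ k l, k < m → l < m → (v + k * b) % m = (v + l * b) % m → k = l := by
    intro k l hk hl h
    have hme : v + k * b ≡ v + l * b [MOD m] := h
    have h1 : k * b ≡ l * b [MOD m] := Nat.ModEq.add_left_cancel' v hme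
    have h2 : k ≡ l [MOD m] :=
      Nat.ModEq.cancel_right_of_coprime (by simpa [Nat.Coprime, Nat.gcd_comm] using hmb) h1
    have := h2
    unfold Nat.ModEq at this
    rwa [Nat.mod_eq_of_lt hk, Nat.mod_eq_of_lt hl] at this
  -- the chain lemma
  have chain : ∀ c k, (∀ l, k ≤ l → l < k + c → (v + l * b) % m ≠ u ∧ (v + l * b) % m ≠ w) →
      P ((v + k * b) % m) = P ((v + (k + c) * b) % m) := by
    intro c
    induction c with
    | zero => intro k _; rfl
    | succ c ih =>
      intro k hok
      have h1 := ih k (fun l hl1 hl2 => hok l hl1 (by omega))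
      have h2 := edge ((v + (k + c) * b) % m) (Nat.mod_lt _ hmpos)
        (hok (k + c) (by omega) (by omega)).1 (hok (k + c) (by omega) (by omega)).2
      rw [Nat.mod_add_mod] at h2
      have h3 : v + (k + c) * b + b = v + (k + (c + 1)) * b := by ring
      rw [h3] at h2
      rw [h1, h2]
  -- find d with x_d = u
  have hum : u < m := by omega
  have surj : ∃ d, d < m ∧ (v + d * b) % m = u := by
    have hinj : Function.Injective (fun k : Fin m => (⟨(v + k.1 * b) % m, Nat.mod_lt _ hmpos⟩ : Fin m)) := by
      intro k l h
      exact Fin.ext (inj k.1 l.1 k.2 l.2 (congrArg Fin.val h))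
    obtain ⟨d, hd⟩ := Finite.surjective_of_injective hinj ⟨u, hum⟩
    exact ⟨d.1, d.2, congrArg Fin.val hd⟩
  obtain ⟨d, hdm, hdu⟩ := surj
  have hvb : v = w - a := rfl
  have hvw : w = a + v := by omega
  have hvm : v < b := by omega
  -- x_{m-1} = w
  have hxw : (v + (m - 1) * b) % m = w := by
    have h0 : (m - 1) * b = m * b - 1 * b := Nat.sub_mul m 1 b
    have h1 : (b - 1) * m = b * m - 1 * m := Nat.sub_mul b 1 m
    have h2 : m ≤ b * m := Nat.le_mul_of_pos_left m hb
    have h3 : b ≤ m * b := Nat.le_mul_of_pos_left b hmpos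
    have h4 : m * b = b * m := Nat.mul_comm m b
    have key : v + (m - 1) * b = (b - 1) * m + w := by omega
    rw [key, Nat.add_comm, Nat.add_mul_mod_self_right]
    exact Nat.mod_eq_of_lt (by omega)
  have hdne : d ≠ m - 1 := by
    intro h
    rw [h, hxw] at hdu
    omega
  have huw : u ≠ w := by omega
  -- side condition helper
  have hside : ∀ l, l < m → l ≠ d → l ≠ m - 1 →
      (v + l * b) % m ≠ u ∧ (v + l * b) % m ≠ w := by
    intro l hl hld hlm
    constructor
    · intro h; exact hld (inj l d hl hdm (h.trans hdu.symm))
    · intro h; exact hlm (inj l (m - 1) hl (by omega) (h.trans hxw.symm))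
  -- first conclusion: P v = P u
  have hc1 : P v = P u := by
    have := chain d 0 (fun l hl1 hl2 => hside l (by omega) (by omega) (by omega))
    rw [Nat.zero_add, hdu] at this
    rwa [Nat.zero_mul, Nat.add_zero, Nat.mod_eq_of_lt (by omega : v < m)] at this
  -- second conclusion: P (u+b) = P w
  have hc2 : P (u + b) = P w := by
    have := chain (m - 1 - (d + 1)) (d + 1)
      (fun l hl1 hl2 => hside l (by omega) (by omega) (by omega))
    have he : d + 1 + (m - 1 - (d + 1)) = m - 1 := by omega
    rw [he, hxw] at this
    have he2 : (v + (d + 1) * b) % m = u + b := by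
      have : v + (d + 1) * b = v + d * b + b := by ring
      rw [this, ← Nat.mod_add_mod, hdu]
      exact Nat.mod_eq_of_lt (by omega)
    rwa [he2] at this
  constructor
  · exact of_P u v hum (by omega) hc1.symm
  · exact of_P (u + b) w (by omega) (by omega) hc2

/-- Lemma 2.6 (iii): if equations (2) hold for all `i ≠ i₁` and equations (3)
hold for all `j ≠ j₁`, then `f_{t+(i₁-1)g} = f_{t+(j₁-1)g}` and
`f_{t+(i₁-1)g+s} = f_{t+(j₁-1)g+r}`. -/
theorem stmt_19 (n r s t : ℕ) (hr : 0 < r) (hs : 0 < s) (ht : 0 < t)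
    (g : ℕ) (hg : g = Nat.gcd r s)
    (hn : r + s - g < n) (htn : t ≤ n + g - r - s) (f : Fin n → Bool)
    (i₁ j₁ : ℕ) (hi₁ : i₁ ∈ Finset.Icc 1 (r / g)) (hj₁ : j₁ ∈ Finset.Icc 1 (s / g))
    (h2 : ∀ i ∈ Finset.Icc 1 (r / g), i ≠ i₁ →
      bitEq f (t + (i - 1) * g) (t + (i - 1) * g + s))
    (h3 : ∀ j ∈ Finset.Icc 1 (s / g), j ≠ j₁ →
      bitEq f (t + (j - 1) * g) (t + (j - 1) * g + r)) :
    bitEq f (t + (i₁ - 1) * g) (t + (j₁ - 1) * g) ∧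
      bitEq f (t + (i₁ - 1) * g + s) (t + (j₁ - 1) * g + r) := by
  have hgpos : 0 < g := hg ▸ Nat.gcd_pos_of_pos_left s hr
  set a := r / g with ha'
  set b := s / g with hb'
  have hra : a * g = r := by
    rw [ha', hg]; exact Nat.div_mul_cancel (Nat.gcd_dvd_left r s)
  have hsb : b * g = s := by
    rw [hb', hg]; exact Nat.div_mul_cancel (Nat.gcd_dvd_right r s)
  have hapos : 0 < a := by
    rcases Nat.eq_zero_or_pos a with h | h
    · rw [h] at hra; omega
    · exact h
  have hbpos : 0 < b := by
    rcases Nat.eq_zero_or_pos b with h | h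
    · rw [h] at hsb; omega
    · exact h
  have hab : Nat.Coprime a b := by
    rw [ha', hb', hg]; exact Nat.coprime_div_gcd_div_gcd (hg ▸ hgpos)
  simp only [Finset.mem_Icc] at hi₁ hj₁
  set u := i₁ - 1 with hu'
  set w := a + (j₁ - 1) with hw'
  have hbound : t + (a + b - 1) * g ≤ n := by
    have e1 : (a + b - 1) * g = (a + b) * g - 1 * g := Nat.sub_mul (a + b) 1 g
    have e2 : (a + b) * g = a * g + b * g := Nat.add_mul a b g
    have e3 : g ≤ (a + b) * g := Nat.le_mul_of_pos_left g (by omega)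
    omega
  obtain ⟨c1, c2⟩ := aux19 n t g a b hgpos hapos hbpos hab ht hbound f u w
    (by omega) (by omega) (by omega)
    (by
      intro x hx hxu
      have h := h2 (x + 1) (Finset.mem_Icc.mpr (by omega)) (by omega)
      simpa [hsb] using h)
    (by
      intro x hxa hxm hxw
      have h := h3 (x - a + 1) (Finset.mem_Icc.mpr (by omega)) (by omega)
      simpa [hra] using h)
  constructor
  · have e : w - a = j₁ - 1 := by omega
    rwa [e] at c1
  · have e1 : (u + b) * g = (i₁ - 1) * g + s := by rw [Nat.add_mul, hsb]
    have e2 : w * g = (j₁ - 1) * g + r := by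
      rw [hw', Nat.add_mul, hra]; ring
    rwa [e1, ← Nat.add_assoc, e2, ← Nat.add_assoc] at c2
end
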